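/- (Corollary 4) The Pursuer has a winning strategy in a position independent generalized Cops and Robbers game G if and only if the round summary digraph R_G admits a removable vertex ordering. -/
import Mathlib


open Classical

/-- A generalized Cops and Robbers game on Pursuer positions `PP` and Evader positions `PE`.
`F` is the set of final positions, `I` the set of allowed start positions, and
`AP`/`AE` give the (nonempty) sets of allowed moves of the Pursuer/Evader from a
non-final position (a move changes only that player's own coordinate). -/
structure GCR (PP PE : Type*) where
  F : PP → PE → Prop
  I : PP → PE → Prop
  AP : PP → PE → Set PP
  AE : PP → PE → Set PE
  I_nonempty : ∃ p q, I p q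
  AP_nonempty : ∀ p q, ¬ F p q → (AP p q).Nonempty
  AE_nonempty : ∀ p q, ¬ F p q → (AE p q).Nonempty

namespace GCR

variable {PP PE : Type*}

/-- The Pursuer's allowed start positions `I_P`. -/
def IP (G : GCR PP PE) (p : PP) : Prop := ∃ q, G.I p q

/-- The Evader's allowed start positions `I_E(p)` against the Pursuer start `p`. -/
def IE (G : GCR PP PE) (p : PP) (q : PE) : Prop := G.I p q

/-- The sequence of relations `≼_i` from Evader positions to Pursuer positions:
`q ≼_0 p` iff `(p,q) ∈ F`; and for `i ≥ 1`, `q ≼_i p` iff `(p,q) ∈ F` or for every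
`x ∈ A_E(p,q)` either `(p,x) ∈ F` or there is `w ∈ A_P(p,x)` with `x ≼_j w` for some `j < i`. -/
def rel (G : GCR PP PE) : ℕ → PE → PP → Prop
  | 0, q, p => G.F p q
  | (i+1), q, p => G.F p q ∨
      ∀ x ∈ G.AE p q, G.F p x ∨ ∃ w ∈ G.AP p x, ∃ j, ∃ _ : j < i + 1, G.rel j x w
  termination_by i _ _ => i
  decreasing_by omega

/-- The stabilized relation `≼`. -/
def Rel (G : GCR PP PE) (q : PE) (p : PP) : Prop := ∃ i, G.rel i q p

/-- A strategy for the Pursuer: an initial position together with a move for every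
finite history of positions (most recent first). -/
structure PStrat (G : GCR PP PE) where
  init : PP
  move : List (PP × PE) → PP

/-- A strategy for the Evader: an initial position (depending on the Pursuer's choice)
together with a move for every finite history of positions (most recent first). -/
structure EStrat (G : GCR PP PE) where
  init : PP → PE
  move : List (PP × PE) → PE

/-- A Pursuer strategy plays allowed moves at every non-final position. -/
def PStrat.MovesValid {G : GCR PP PE} (σ : PStrat G) : Prop :=
  ∀ (h : List (PP × PE)) (c : PP × PE), ¬ G.F c.1 c.2 → σ.move (c :: h) ∈ G.AP c.1 c.2

/-- An Evader strategy plays allowed moves at every non-final position. -/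
def EStrat.MovesValid {G : GCR PP PE} (τ : EStrat G) : Prop :=
  ∀ (h : List (PP × PE)) (c : PP × PE), ¬ G.F c.1 c.2 → τ.move (c :: h) ∈ G.AE c.1 c.2

/-- A valid Pursuer strategy: the initial position is an allowed start position,
and all moves are allowed. -/
def PStrat.Valid {G : GCR PP PE} (σ : PStrat G) : Prop :=
  G.IP σ.init ∧ σ.MovesValid

/-- A valid Evader strategy: the initial position is an allowed response to any allowed
Pursuer start position, and all moves are allowed. -/
def EStrat.Valid {G : GCR PP PE} (τ : EStrat G) : Prop :=
  (∀ p, G.IP p → G.IE p (τ.init p)) ∧ τ.MovesValid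

/-- The play of the game determined by strategies `σ` and `τ`: first both players choose
their start positions, then they move alternately with the Pursuer moving first.
Returns the current position after `n` single moves together with the history so far. -/
def play (G : GCR PP PE) (σ : PStrat G) (τ : EStrat G) : ℕ → (PP × PE) × List (PP × PE)
  | 0 => ((σ.init, τ.init σ.init), [(σ.init, τ.init σ.init)])
  | (n+1) =>
      let s := play G σ τ n
      let nxt := if n % 2 = 0 then (σ.move s.2, s.1.2) else (s.1.1, τ.move s.2)
      (nxt, nxt :: s.2)

/-- The position after `n` single moves of the play determined by `σ` and `τ`. -/
def pos (G : GCR PP PE) (σ : PStrat G) (τ : EStrat G) (n : ℕ) : PP × PE :=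
  (play G σ τ n).1

/-- Play from a given mid-game position `start`; `pFirst = true` means the Pursuer is
next to move. The players move alternately. Returns the current position after `n`
single moves together with the history so far. -/
def playFrom (G : GCR PP PE) (σ : PStrat G) (τ : EStrat G) (start : PP × PE)
    (pFirst : Bool) : ℕ → (PP × PE) × List (PP × PE)
  | 0 => (start, [start])
  | (n+1) =>
      let s := playFrom G σ τ start pFirst n
      let nxt := if (decide (n % 2 = 0)) == pFirst
        then (σ.move s.2, s.1.2) else (s.1.1, τ.move s.2)
      (nxt, nxt :: s.2)

/-- The position after `n` single moves of the play from state `(start, pFirst)`. -/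
def posFrom (G : GCR PP PE) (σ : PStrat G) (τ : EStrat G) (start : PP × PE)
    (pFirst : Bool) (n : ℕ) : PP × PE :=
  (playFrom G σ τ start pFirst n).1

/-- The Pursuer has a winning strategy: a valid strategy such that against every valid
Evader strategy the position eventually belongs to `F`. -/
def PursuerWins (G : GCR PP PE) : Prop :=
  ∃ σ : PStrat G, σ.Valid ∧ ∀ τ : EStrat G, τ.Valid →
    ∃ n, G.F (pos G σ τ n).1 (pos G σ τ n).2

/-- The Evader has a winning strategy: a valid strategy such that against every valid
Pursuer strategy the position never belongs to `F`. -/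
def EvaderWins (G : GCR PP PE) : Prop :=
  ∃ τ : EStrat G, τ.Valid ∧ ∀ σ : PStrat G, σ.Valid →
    ∀ n, ¬ G.F (pos G σ τ n).1 (pos G σ τ n).2

/-! ### The state digraph and its labelling -/

/-- The initial labelling of the state digraph: final states get `0`, all others `∞`.
A state is a position together with a `Bool` which is `true` when the Pursuer is next
to move. -/
noncomputable def labelInit (G : GCR PP PE) : (PP × PE) × Bool → ℕ∞ :=
  fun s => if G.F s.1.1 s.1.2 then 0 else ⊤

/-- One round of updates of the labelling procedure: a non-final Pursuer-to-move state
gets `1 +` the minimum label over its out-neighbours, and a non-final Evader-to-move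
state gets `1 +` the maximum label over its out-neighbours. -/
noncomputable def labelStep (G : GCR PP PE) (f : (PP × PE) × Bool → ℕ∞) :
    (PP × PE) × Bool → ℕ∞ :=
  fun s =>
    if G.F s.1.1 s.1.2 then 0
    else if s.2 then 1 + ⨅ w ∈ G.AP s.1.1 s.1.2, f ((w, s.1.2), false)
    else 1 + ⨆ x ∈ G.AE s.1.1 s.1.2, f ((s.1.1, x), true)

/-- The stable labelling of the state digraph, obtained by repeating the update
procedure until no label changes (the iterates decrease pointwise, so the stable
labelling is the pointwise infimum of the iterates). -/
noncomputable def label (G : GCR PP PE) (s : (PP × PE) × Bool) : ℕ∞ :=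
  ⨅ n : ℕ, (G.labelStep)^[n] G.labelInit s

/-! ### Length of the game -/

/-- The number of moves the Pursuer makes before the position first lies in `F`, in the
play determined by `σ` and `τ` (the Pursuer moves at odd time-steps, so has made
`(n+1)/2` moves by time-step `n`); `⊤` if the position never lies in `F`. -/
noncomputable def captureMoves (G : GCR PP PE) (σ : PStrat G) (τ : EStrat G) : ℕ∞ :=
  ⨅ (n : ℕ) (_ : G.F (pos G σ τ n).1 (pos G σ τ n).2), (((n + 1) / 2 : ℕ) : ℕ∞)

/-- The length of the game under optimal play: the minimum over valid Pursuer strategies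
of the maximum over valid Evader strategies of the number of Pursuer moves made before
the position first lies in `F`. -/
noncomputable def gameLength (G : GCR PP PE) : ℕ∞ :=
  ⨅ (σ : PStrat G) (_ : σ.Valid), ⨆ (τ : EStrat G) (_ : τ.Valid), G.captureMoves σ τ

/-- The quantity `ℓ(p,q)` from Corollary 1. -/
noncomputable def ell (G : GCR PP PE) (p : PP) (q : PE) : ℕ∞ :=
  if G.Rel q p then ⨅ (j : ℕ) (_ : G.rel j q p), (j : ℕ∞)
  else 1 + ⨆ w ∈ G.AP p q, ⨅ (j : ℕ) (_ : G.rel j q w), (j : ℕ∞)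

/-! ### Position independent games -/

/-- A game is position independent (with position digraphs given by out-neighbour maps
`GP` and `GE`) if, from any non-final position, the allowed moves of the Pursuer depend
only on the Pursuer's position and the allowed moves of the Evader depend only on the
Evader's position. -/
def PositionIndependent (G : GCR PP PE) (GP : PP → Set PP) (GE : PE → Set PE) : Prop :=
  ∀ p q, ¬ G.F p q → G.AP p q = GP p ∧ G.AE p q = GE q

/-- A vertex `(p,q)` of the round summary digraph is removable with respect to a set `S`
of vertices. -/
def Removable (G : GCR PP PE) (GP : PP → Set PP) (GE : PE → Set PE)
    (v : PP × PE) (S : Set (PP × PE)) : Prop :=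
  G.F v.1 v.2 ∨ ∀ x ∈ GE v.2, G.F v.1 x ∨ ∃ y ∈ GP v.1, (y, x) ∈ S

/-- A removable vertex ordering of the round summary digraph: a sequence of vertices in
which each element is removable with respect to the set of vertices preceding it, and
there is a Pursuer start position `p ∈ I_P` such that for all `q ∈ I_E(p)` either
`(p,q) ∈ F` or the Pursuer has an allowed move `w` with `(w,q)` in the sequence. -/
def RemovableOrdering (G : GCR PP PE) (GP : PP → Set PP) (GE : PE → Set PE)
    (L : List (PP × PE)) : Prop :=
  (∀ i : Fin L.length, G.Removable GP GE (L.get i)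
      {w | ∃ j : Fin L.length, (j : ℕ) < (i : ℕ) ∧ L.get j = w}) ∧
  ∃ p, G.IP p ∧ ∀ q, G.IE p q → G.F p q ∨ ∃ w ∈ GP p, (w, q) ∈ L


set_option linter.dupNamespace false
set_option maxHeartbeats 1000000

lemma rel_zero_iff (G : GCR PP PE) (q : PE) (p : PP) : G.rel 0 q p ↔ G.F p q := by
  rw [rel]

lemma rel_succ_iff (G : GCR PP PE) (i : ℕ) (q : PE) (p : PP) :
    G.rel (i+1) q p ↔ (G.F p q ∨
      ∀ x ∈ G.AE p q, G.F p x ∨ ∃ w ∈ G.AP p x, ∃ j, ∃ _ : j < i + 1, G.rel j x w) := by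
  rw [rel]

lemma rel_succ_self {G : GCR PP PE} {i : ℕ} {q : PE} {p : PP} (h : G.rel i q p) :
    G.rel (i+1) q p := by
  cases i with
  | zero => rw [rel_zero_iff] at h; rw [rel_succ_iff]; exact Or.inl h
  | succ n =>
    rw [rel_succ_iff] at h ⊢
    rcases h with h | h
    · exact Or.inl h
    · refine Or.inr fun x hx => ?_
      rcases h x hx with h | ⟨w, hw, j, hj, hr⟩
      · exact Or.inl h
      · exact Or.inr ⟨w, hw, j, by omega, hr⟩

lemma rel_mono {G : GCR PP PE} {i k : ℕ} (hik : i ≤ k) {q : PE} {p : PP}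
    (h : G.rel i q p) : G.rel k q p := by
  induction k with
  | zero => exact (Nat.le_zero.mp hik ▸ h)
  | succ n ih =>
    rcases Nat.lt_or_ge i (n+1) with hlt | hge
    · exact rel_succ_self (ih (by omega))
    · have : i = n + 1 := by omega
      exact this ▸ h

lemma F_of_rel_zero {G : GCR PP PE} {q : PE} {p : PP} (h : G.rel 0 q p) : G.F p q :=
  (rel_zero_iff G q p).mp h

/-- The key condition. -/
def Cond (G : GCR PP PE) : Prop :=
  ∃ p, G.IP p ∧ ∀ q, G.IE p q → G.F p q ∨ ∃ w ∈ G.AP p q, G.Rel q w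

/-- Head of the history is the current position. -/
lemma play_snd_head (G : GCR PP PE) (σ : PStrat G) (τ : EStrat G) (n : ℕ) :
    ∃ t, (play G σ τ n).2 = (play G σ τ n).1 :: t := by
  cases n with
  | zero => exact ⟨[], rfl⟩
  | succ m => exact ⟨(play G σ τ m).2, rfl⟩

/-- The set of ranks available to the Pursuer at a position. -/
def rkSet (G : GCR PP PE) (p : PP) (q : PE) : Set ℕ :=
  {k | ∃ w ∈ G.AP p q, G.rel k q w}

/-- The Pursuer's canonical move. -/
noncomputable def pmove (G : GCR PP PE) (p : PP) (q : PE) : PP :=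
  if hF : G.F p q then p
  else if h : (G.rkSet p q).Nonempty then
    (Nat.sInf_mem h).choose
  else (G.AP_nonempty p q hF).choose

lemma pmove_mem {G : GCR PP PE} {p : PP} {q : PE} (hF : ¬ G.F p q) :
    G.pmove p q ∈ G.AP p q := by
  rw [pmove, dif_neg hF]
  by_cases h : (G.rkSet p q).Nonempty
  · rw [dif_pos h]
    exact (Nat.sInf_mem h).choose_spec.1
  · rw [dif_neg h]
    exact (G.AP_nonempty p q hF).choose_spec

lemma pmove_rel {G : GCR PP PE} {p : PP} {q : PE} (hF : ¬ G.F p q)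
    (h : (G.rkSet p q).Nonempty) : G.rel (sInf (G.rkSet p q)) q (G.pmove p q) := by
  rw [pmove, dif_neg hF, dif_pos h]
  exact (Nat.sInf_mem h).choose_spec.2

/-- The canonical pursuer strategy with initial position `p0`. -/
noncomputable def pstrat (G : GCR PP PE) (p0 : PP) : PStrat G :=
  ⟨p0, fun h => match h with
    | [] => p0
    | c :: _ => G.pmove c.1 c.2⟩

lemma pstrat_movesValid (G : GCR PP PE) (p0 : PP) : (G.pstrat p0).MovesValid :=
  fun _ c hc => pmove_mem hc

/-- Core capture lemma: strong induction on the rank. -/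
lemma capture (G : GCR PP PE) (p0 : PP) (τ : EStrat G) (hτ : τ.MovesValid) :
    ∀ k n, n % 2 = 0 →
      (G.F (pos G (G.pstrat p0) τ n).1 (pos G (G.pstrat p0) τ n).2 ∨
        ∃ w ∈ G.AP (pos G (G.pstrat p0) τ n).1 (pos G (G.pstrat p0) τ n).2,
          G.rel k (pos G (G.pstrat p0) τ n).2 w) →
      ∃ m, G.F (pos G (G.pstrat p0) τ m).1 (pos G (G.pstrat p0) τ m).2 := by
  intro k
  induction k using Nat.strong_induction_on with
  | _ k IH =>
    intro n hn hyp
    set σ := G.pstrat p0 with hσ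
    rcases hyp with hF | hex
    · exact ⟨n, hF⟩
    set p := (pos G σ τ n).1 with hp
    set q := (pos G σ τ n).2 with hq
    by_cases hF : G.F p q
    · exact ⟨n, hF⟩
    -- position after pursuer's move
    have hne : (G.rkSet p q).Nonempty := ⟨k, hex⟩
    set k0 := sInf (G.rkSet p q) with hk0
    have hk0le : k0 ≤ k := Nat.sInf_le hex
    obtain ⟨t, ht⟩ := G.play_snd_head σ τ n
    have hpos1 : pos G σ τ (n+1) = (G.pmove p q, q) := by
      show (play G σ τ (n+1)).1 = _
      rw [play]
      simp only [hn, if_pos]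
      have : σ.move (play G σ τ n).2 = G.pmove p q := by
        rw [ht]; rfl
      rw [this]; rfl
    have hpos1' : (play G σ τ (n+1)).1 = (G.pmove p q, q) := hpos1
    set w0 := G.pmove p q with hw0
    have hrelw0 : G.rel k0 q w0 := pmove_rel hF hne
    by_cases hF1 : G.F w0 q
    · exact ⟨n+1, by rw [hpos1]; exact hF1⟩
    -- k0 cannot be 0
    have hk0pos : k0 ≠ 0 := by
      intro h0
      exact hF1 (F_of_rel_zero (h0 ▸ hrelw0))
    obtain ⟨j, hj⟩ : ∃ j, k0 = j + 1 := ⟨k0 - 1, by omega⟩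
    rw [hj, rel_succ_iff] at hrelw0
    have hrelw0' := hrelw0.resolve_left hF1
    -- evader's move
    obtain ⟨t1, ht1⟩ := G.play_snd_head σ τ (n+1)
    have hx : τ.move (play G σ τ (n+1)).2 ∈ G.AE w0 q := by
      rw [ht1, hpos1']
      exact hτ t1 (w0, q) hF1
    set x := τ.move (play G σ τ (n+1)).2 with hxdef
    have hpos2 : pos G σ τ (n+2) = (w0, x) := by
      show (play G σ τ (n+2)).1 = _
      have h1 : ¬ ((n+1) % 2 = 0) := by omega
      rw [play]
      simp only [if_neg h1]
      rw [hpos1']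
    by_cases hF2 : G.F w0 x
    · exact ⟨n+2, by rw [hpos2]; exact hF2⟩
    rcases hrelw0' x hx with hF2' | ⟨w', hw', j', hj', hr'⟩
    · exact absurd hF2' hF2
    refine IH j' (by omega) (n+2) (by omega) ?_
    rw [hpos2]
    exact Or.inr ⟨w', hw', hr'⟩

lemma pursuerWins_of_cond (G : GCR PP PE) (h : G.Cond) : G.PursuerWins := by
  obtain ⟨p0, hp0, hstart⟩ := h
  refine ⟨G.pstrat p0, ⟨hp0, G.pstrat_movesValid p0⟩, fun τ hτ => ?_⟩
  have hpos0 : pos G (G.pstrat p0) τ 0 = (p0, τ.init p0) := rfl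
  have hIE : G.IE p0 (τ.init p0) := hτ.1 p0 hp0
  rcases hstart (τ.init p0) hIE with hF | ⟨w, hw, k, hk⟩
  · exact ⟨0, by rw [hpos0]; exact hF⟩
  · exact G.capture p0 τ hτ.2 k 0 rfl (Or.inr ⟨w, by rw [hpos0]; exact ⟨hw, hk⟩⟩)

/-- Safety for positions with the Pursuer to move. -/
def SafeP (G : GCR PP PE) (p : PP) (q : PE) : Prop :=
  ¬ G.F p q ∧ ∀ w ∈ G.AP p q, ¬ G.Rel q w

/-- Safety for positions with the Evader to move. -/
def SafeE (G : GCR PP PE) (p : PP) (q : PE) : Prop := ¬ G.Rel q p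

lemma SafeE.not_F {G : GCR PP PE} {p : PP} {q : PE} (h : G.SafeE p q) : ¬ G.F p q :=
  fun hF => h ⟨0, (rel_zero_iff G q p).mpr hF⟩

lemma SafeE.step [Fintype PE] {G : GCR PP PE} {p : PP} {q : PE} (h : G.SafeE p q) :
    ∃ x ∈ G.AE p q, G.SafeP p x := by
  by_contra hcon
  push_neg at hcon
  -- for each x, pick a bound
  have hbnd : ∀ x : PE, ∃ N, x ∈ G.AE p q → (G.F p x ∨ ∃ w ∈ G.AP p x, G.rel N x w) := by
    intro x
    by_cases hx : x ∈ G.AE p q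
    · rcases Classical.em (G.F p x) with hF | hF
      · exact ⟨0, fun _ => Or.inl hF⟩
      · have := hcon x hx
        rw [SafeP] at this
        push_neg at this
        obtain ⟨w, hw, hrel⟩ := this hF
        obtain ⟨N, hN⟩ := hrel
        exact ⟨N, fun _ => Or.inr ⟨w, hw, hN⟩⟩
    · exact ⟨0, fun h' => absurd h' hx⟩
  choose Nf hNf using hbnd
  set N := Finset.univ.sup Nf with hN
  apply h
  refine ⟨N + 1, ?_⟩
  rw [rel_succ_iff]
  refine Or.inr fun x hx => ?_
  rcases hNf x hx with hF | ⟨w, hw, hr⟩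
  · exact Or.inl hF
  · exact Or.inr ⟨w, hw, N, by omega,
      rel_mono (Finset.le_sup (Finset.mem_univ x)) hr⟩

lemma SafeP.step {G : GCR PP PE} {p : PP} {q : PE} (h : G.SafeP p q) {w : PP}
    (hw : w ∈ G.AP p q) : G.SafeE w q := h.2 w hw

/-- The canonical evader strategy. -/
noncomputable def emove (G : GCR PP PE) (qdef : PE) (p : PP) (q : PE) : PE :=
  if hF : G.F p q then qdef
  else if h : ∃ x, x ∈ G.AE p q ∧ G.SafeP p x then h.choose
  else (G.AE_nonempty p q hF).choose

lemma emove_mem {G : GCR PP PE} {qdef : PE} {p : PP} {q : PE} (hF : ¬ G.F p q) :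
    G.emove qdef p q ∈ G.AE p q := by
  rw [emove, dif_neg hF]
  by_cases h : ∃ x, x ∈ G.AE p q ∧ G.SafeP p x
  · rw [dif_pos h]; exact h.choose_spec.1
  · rw [dif_neg h]; exact (G.AE_nonempty p q hF).choose_spec

lemma emove_safe {G : GCR PP PE} {qdef : PE} {p : PP} {q : PE} (hF : ¬ G.F p q)
    (h : ∃ x, x ∈ G.AE p q ∧ G.SafeP p x) : G.SafeP p (G.emove qdef p q) := by
  rw [emove, dif_neg hF, dif_pos h]
  exact h.choose_spec.2

noncomputable def estrat (G : GCR PP PE) (qdef : PE) (init : PP → PE) : EStrat G :=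
  ⟨init, fun h => match h with
    | [] => qdef
    | c :: _ => G.emove qdef c.1 c.2⟩

lemma not_pursuerWins_of_not_cond [Fintype PE] (G : GCR PP PE) (h : ¬ G.Cond) :
    ¬ G.PursuerWins := by
  obtain ⟨pd, qdef, _⟩ := G.I_nonempty
  rw [Cond] at h
  push_neg at h
  -- for each p ∈ IP, a safe initial response
  have hinit : ∀ p : PP, ∃ q, G.IP p → (G.IE p q ∧ G.SafeP p q) := by
    intro p
    by_cases hp : G.IP p
    · obtain ⟨q, hq, hF, hsafe⟩ := h p hp
      exact ⟨q, fun _ => ⟨hq, ⟨hF, hsafe⟩⟩⟩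
    · exact ⟨qdef, fun h' => absurd h' hp⟩
  choose initf hinitf using hinit
  set τ := G.estrat qdef initf with hτdef
  have hτvalid : τ.Valid := by
    constructor
    · exact fun p hp => (hinitf p hp).1
    · exact fun _ c hc => emove_mem hc
  rintro ⟨σ, hσ, hwin⟩
  obtain ⟨n, hn⟩ := hwin τ hτvalid
  -- invariant
  have hsafe : ∀ m, (m % 2 = 0 → G.SafeP (pos G σ τ m).1 (pos G σ τ m).2) ∧
      (m % 2 = 1 → G.SafeE (pos G σ τ m).1 (pos G σ τ m).2) := by
    intro m
    induction m with
    | zero =>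
      refine ⟨fun _ => ?_, fun habs => by omega⟩
      exact (hinitf σ.init hσ.1).2
    | succ m ih =>
      rcases Nat.even_or_odd m with ⟨l, hl⟩ | ⟨l, hl⟩
      · -- m even: pursuer moves at m+1
        have hm : m % 2 = 0 := by omega
        have hP := ih.1 hm
        obtain ⟨t, ht⟩ := G.play_snd_head σ τ m
        have hpos1 : pos G σ τ (m+1) = (σ.move (play G σ τ m).2, (pos G σ τ m).2) := by
          show (play G σ τ (m+1)).1 = _
          rw [play]; simp only [if_pos hm]; rfl
        have hmem : σ.move (play G σ τ m).2 ∈ G.AP (pos G σ τ m).1 (pos G σ τ m).2 := by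
          rw [ht]
          exact hσ.2 t _ hP.1
        refine ⟨fun habs => by omega, fun _ => ?_⟩
        rw [hpos1]
        exact hP.step hmem
      · -- m odd: evader moves at m+1
        have hm : m % 2 = 1 := by omega
        have hE := ih.2 hm
        obtain ⟨t, ht⟩ := G.play_snd_head σ τ m
        have hm0 : ¬ (m % 2 = 0) := by omega
        have hpos1 : pos G σ τ (m+1) = ((pos G σ τ m).1, τ.move (play G σ τ m).2) := by
          show (play G σ τ (m+1)).1 = _
          rw [play]; simp only [if_neg hm0]; rfl
        have hFm := hE.not_F
        have hmove : τ.move (play G σ τ m).2 =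
            G.emove qdef (pos G σ τ m).1 (pos G σ τ m).2 := by
          rw [ht]; rfl
        refine ⟨fun _ => ?_, fun habs => by omega⟩
        rw [hpos1, hmove]
        exact emove_safe hFm hE.step
  have := hsafe n
  rcases Nat.even_or_odd n with ⟨l, hl⟩ | ⟨l, hl⟩
  · exact (this.1 (by omega)).1 hn
  · exact (this.2 (by omega)).not_F hn

lemma removable_mono {G : GCR PP PE} {GP : PP → Set PP} {GE : PE → Set PE}
    {v : PP × PE} {S S' : Set (PP × PE)} (hSS : S ⊆ S')
    (h : G.Removable GP GE v S) : G.Removable GP GE v S' := by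
  rcases h with h | h
  · exact Or.inl h
  · refine Or.inr fun x hx => ?_
    rcases h x hx with h' | ⟨y, hy, hyS⟩
    · exact Or.inl h'
    · exact Or.inr ⟨y, hy, hSS hyS⟩

lemma removable_of_rel [Fintype PP] [Fintype PE] {G : GCR PP PE}
    {GP : PP → Set PP} {GE : PE → Set PE} (hPI : G.PositionIndependent GP GE)
    {n : ℕ} {v : PP × PE} (h : G.rel (n+1) v.2 v.1) :
    G.Removable GP GE v {w | G.rel n w.2 w.1} := by
  by_cases hF : G.F v.1 v.2
  · exact Or.inl hF
  rw [rel_succ_iff] at h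
  replace h := h.resolve_left hF
  refine Or.inr fun x hx => ?_
  have hAE : G.AE v.1 v.2 = GE v.2 := (hPI v.1 v.2 hF).2
  rcases h x (by rw [hAE]; exact hx) with h' | ⟨w, hw, j, hj, hr⟩
  · exact Or.inl h'
  · by_cases hFx : G.F v.1 x
    · exact Or.inl hFx
    · have hAP : G.AP v.1 x = GP v.1 := (hPI v.1 x hFx).1
      exact Or.inr ⟨w, by rw [← hAP]; exact hw, rel_mono (by omega) hr⟩

/-- Construction of a list satisfying the removability property containing all
positions of `rel`-rank at most `n`. -/
lemma exists_good_list [Fintype PP] [Fintype PE] (G : GCR PP PE)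
    (GP : PP → Set PP) (GE : PE → Set PE) (hPI : G.PositionIndependent GP GE) (n : ℕ) :
    ∃ L : List (PP × PE),
      (∀ i (hi : i < L.length), G.Removable GP GE L[i] {w | w ∈ L.take i}) ∧
      (∀ v : PP × PE, G.rel n v.2 v.1 → v ∈ L) := by
  induction n with
  | zero =>
    refine ⟨(Finset.univ : Finset (PP × PE)).toList.filter
      (fun v => decide (G.F v.1 v.2)), fun i hi => ?_, fun v hv => ?_⟩
    · have hmem := List.getElem_mem hi
      have hF := (List.mem_filter.mp hmem).2
      exact Or.inl (by simpa using hF)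
    · rw [List.mem_filter]
      exact ⟨Finset.mem_toList.mpr (Finset.mem_univ v), by simpa using F_of_rel_zero hv⟩
  | succ m IH =>
    obtain ⟨L, hL1, hL2⟩ := IH
    set M := (Finset.univ : Finset (PP × PE)).toList.filter
      (fun v => decide (G.rel (m+1) v.2 v.1)) with hM
    refine ⟨L ++ M, fun i hi => ?_, fun v hv => ?_⟩
    · rcases Nat.lt_or_ge i L.length with hlt | hge
      · have hget : (L ++ M)[i] = L[i] := List.getElem_append_left hlt
        have htake : (L ++ M).take i = L.take i :=
          List.take_append_of_le_length (by omega)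
        rw [hget, htake]
        exact hL1 i hlt
      · have hIdx : i - L.length < M.length := by
          have h3 : (L ++ M).length = L.length + M.length := by simp
          omega
        have hget : (L ++ M)[i] = M[i - L.length]'hIdx := List.getElem_append_right hge
        have hmemM : M[i - L.length]'hIdx ∈ M := List.getElem_mem hIdx
        have hrel : G.rel (m+1) (M[i - L.length]'hIdx).2 (M[i - L.length]'hIdx).1 := by
          have := (List.mem_filter.mp hmemM).2
          simpa using this
        rw [hget]
        refine removable_mono ?_ (removable_of_rel hPI hrel)
        intro w hw
        have hwL : w ∈ L := hL2 w hw
        show w ∈ (L ++ M).take i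
        rw [List.take_append]
        exact List.mem_append_left _
          (by rw [List.take_of_length_le (by omega)]; exact hwL)
    · refine List.mem_append_right _ ?_
      rw [hM, List.mem_filter]
      exact ⟨Finset.mem_toList.mpr (Finset.mem_univ v), by simpa using hv⟩

/-- A uniform bound for the stabilized relation. -/
lemma exists_uniform_bound [Fintype PP] [Fintype PE] (G : GCR PP PE) :
    ∃ N : ℕ, ∀ v : PP × PE, G.Rel v.2 v.1 → G.rel N v.2 v.1 := by
  classical
  refine ⟨Finset.univ.sup (fun v : PP × PE =>
    if h : G.Rel v.2 v.1 then Classical.choose h else 0), fun v hv => ?_⟩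
  have h1 : (if h : G.Rel v.2 v.1 then Classical.choose h else 0) ≤ _ :=
    Finset.le_sup (f := fun v : PP × PE =>
      if h : G.Rel v.2 v.1 then Classical.choose h else 0) (Finset.mem_univ v)
  rw [dif_pos hv] at h1
  exact rel_mono h1 (Classical.choose_spec hv)

lemma removableOrdering_of_cond [Fintype PP] [Fintype PE] (G : GCR PP PE)
    (GP : PP → Set PP) (GE : PE → Set PE) (hPI : G.PositionIndependent GP GE)
    (h : G.Cond) : ∃ L : List (PP × PE), G.RemovableOrdering GP GE L := by
  obtain ⟨N, hN⟩ := G.exists_uniform_bound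
  obtain ⟨L, hL1, hL2⟩ := G.exists_good_list GP GE hPI N
  obtain ⟨p, hp, hstart⟩ := h
  refine ⟨L, fun i => ?_, p, hp, fun q hq => ?_⟩
  · refine removable_mono ?_ (hL1 i i.isLt)
    intro w hw
    have hw' : w ∈ L.take (i : ℕ) := hw
    rw [List.mem_take_iff_getElem] at hw'
    obtain ⟨j, hj, hjw⟩ := hw'
    refine ⟨⟨j, by omega⟩, ?_, hjw⟩
    show j < (i : ℕ)
    omega
  · rcases hstart q hq with hF | ⟨w, hw, hrel⟩
    · exact Or.inl hF
    · by_cases hF : G.F p q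
      · exact Or.inl hF
      · refine Or.inr ⟨w, by rw [← (hPI p q hF).1]; exact hw, ?_⟩
        exact hL2 (w, q) (hN (w, q) hrel)

lemma cond_of_removableOrdering [Fintype PP] [Fintype PE] (G : GCR PP PE)
    (GP : PP → Set PP) (GE : PE → Set PE) (hPI : G.PositionIndependent GP GE)
    {L : List (PP × PE)} (hL : G.RemovableOrdering GP GE L) : G.Cond := by
  obtain ⟨hrem, p, hp, hstart⟩ := hL
  -- every element of the list satisfies Rel
  have key : ∀ i : ℕ, ∃ N, ∀ j : Fin L.length, (j : ℕ) < i →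
      G.rel N (L.get j).2 (L.get j).1 := by
    intro i
    induction i with
    | zero => exact ⟨0, fun j hj => absurd hj (by omega)⟩
    | succ m IH =>
      obtain ⟨N, hNi⟩ := IH
      rcases Nat.lt_or_ge m L.length with hm | hm
      · refine ⟨N + 1, fun j hj => ?_⟩
        rcases Nat.lt_or_ge (j : ℕ) m with hjm | hjm
        · exact rel_succ_self (hNi j hjm)
        · have hjm' : (j : ℕ) = m := by omega
          -- use removability of element m
          have hr := hrem ⟨m, hm⟩
          set v := L.get ⟨m, hm⟩ with hv
          have hjv : L.get j = v := by
            rw [hv]; congr 1; exact Fin.ext hjm'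
          rw [hjv]
          by_cases hF : G.F v.1 v.2
          · rw [rel_succ_iff]; exact Or.inl hF
          replace hr := hr.resolve_left hF
          rw [rel_succ_iff]
          refine Or.inr fun x hx => ?_
          have hAE : G.AE v.1 v.2 = GE v.2 := (hPI v.1 v.2 hF).2
          rcases hr x (by rw [← hAE]; exact hx) with h' | ⟨y, hy, hyS⟩
          · exact Or.inl h'
          · by_cases hFx : G.F v.1 x
            · exact Or.inl hFx
            · obtain ⟨j', hj', hj'e⟩ := hyS
              have hmm : ((⟨m, hm⟩ : Fin L.length) : ℕ) = m := rfl
              refine Or.inr ⟨y, by rw [(hPI v.1 x hFx).1]; exact hy, N, by omega, ?_⟩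
              have := hNi j' (by omega)
              rw [hj'e] at this
              exact this
      · exact ⟨N, fun j hj => hNi j (by omega)⟩
  obtain ⟨N, hNall⟩ := key L.length
  refine ⟨p, hp, fun q hq => ?_⟩
  rcases hstart q hq with hF | ⟨w, hw, hmem⟩
  · exact Or.inl hF
  · by_cases hF : G.F p q
    · exact Or.inl hF
    · refine Or.inr ⟨w, by rw [(hPI p q hF).1]; exact hw, ?_⟩
      obtain ⟨i, hi, hie⟩ := List.mem_iff_getElem.mp hmem
      have := hNall ⟨i, hi⟩ hi
      simp only [List.get_eq_getElem] at this
      rw [hie] at this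
      exact ⟨N, this⟩
/-- Corollary 4: the Pursuer has a winning strategy in a position independent game if
and only if the round summary digraph admits a removable vertex ordering. -/
theorem pursuerWins_iff_removableOrdering [Fintype PP] [Fintype PE] (G : GCR PP PE)
    (GP : PP → Set PP) (GE : PE → Set PE) (hPI : G.PositionIndependent GP GE) :
    G.PursuerWins ↔ ∃ L : List (PP × PE), G.RemovableOrdering GP GE L := by
  constructor
  · intro h
    have hc : G.Cond := by
      by_contra hc
      exact G.not_pursuerWins_of_not_cond hc h
    exact G.removableOrdering_of_cond GP GE hPI hc
  · rintro ⟨L, hL⟩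
    exact G.pursuerWins_of_cond (G.cond_of_removableOrdering GP GE hPI hL)

end GCR
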